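/- The map φ₂ : ZMod 4 × ZMod 2 → (Fin 3 → ZMod 2) defined by φ₂(i, j) = (j | φ₁(i)), where ( · | · ) denotes concatenation, is a Gray map on the group K₈ = ZMod 4 × ZMod 2. -/
import Mathlib


/-- A map `φ : G → (Fin n → ZMod 2)` on an additive group is a Gray map if
`d_φ(a,b) = w_H(φ (a - b))` is a metric on `G` and `d_φ(a,b) = d_H(φ a, φ b)`. -/
def IsAddGrayMap {G : Type*} [AddGroup G] {n : ℕ} (φ : G → (Fin n → ZMod 2)) : Prop :=
  (∀ a b : G, hammingNorm (φ (a - b)) = 0 ↔ a = b) ∧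
  (∀ a b : G, hammingNorm (φ (a - b)) = hammingNorm (φ (b - a))) ∧
  (∀ a b c : G, hammingNorm (φ (a - c)) ≤
      hammingNorm (φ (a - b)) + hammingNorm (φ (b - c))) ∧
  (∀ a b : G, hammingNorm (φ (a - b)) = hammingDist (φ a) (φ b))

/-- The standard Gray map on `C₄ = ZMod 4`:
`0 ↦ 00, 1 ↦ 01, 2 ↦ 11, 3 ↦ 10`. -/
def phi1 (i : ZMod 4) : Fin 2 → ZMod 2 :=
  if i = 0 then ![0, 0] else if i = 1 then ![0, 1] else if i = 2 then ![1, 1] else ![1, 0]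

/-- The map `φ₂ : ZMod 4 × ZMod 2 → (Fin 3 → ZMod 2)`, `φ₂(i, j) = (j | φ₁ i)`. -/
def phi2 (p : ZMod 4 × ZMod 2) : Fin 3 → ZMod 2 :=
  Matrix.vecCons p.2 (phi1 p.1)

/-- Example 4.2: `φ₂` is a Gray map on `K₈ = ZMod 4 × ZMod 2`. -/
theorem stmt10 : IsAddGrayMap phi2 := by
  unfold IsAddGrayMap
  refine ⟨?_, ?_, ?_, ?_⟩ <;> decide
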